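/- Let I ⊆ ℕ be finite, Z ⊆ I, and X ⊆ [I]² with nor_I(X) > 2. Then nor_I([Z]² ∩ X) ≥ nor_I(X)/2 − 1 or nor_I([I ∖ Z]² ∩ X) ≥ nor_I(X)/2 − 1 (equivalently, 2·nor_I([Z]² ∩ X) + 2 ≥ nor_I(X) or 2·nor_I([I ∖ Z]² ∩ X) + 2 ≥ nor_I(X)). -/

import Mathlib

/-- `offDiagSq I = [I]² = (I × I) \ Δ`, the off-diagonal part of the square of `I`. -/
def offDiagSq (I : Set ℕ) : Set (ℕ × ℕ) := (I ×ˢ I) \ {p : ℕ × ℕ | p.1 = p.2}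

/-- `nor X` is the least `k` such that `X` can be covered by `k` rectangles
`A i ×ˢ B i` with `A i ∩ B i = ∅`. -/
noncomputable def nor (X : Set (ℕ × ℕ)) : ℕ :=
  sInf {k : ℕ | ∃ A B : ℕ → Set ℕ,
    (∀ i < k, A i ∩ B i = ∅) ∧ X ⊆ ⋃ i < k, A i ×ˢ B i}

lemma exists_cover (X : Set (ℕ × ℕ)) (hfin : X.Finite) :
    (∀ p ∈ X, p.1 ≠ p.2) →
    ∃ k, ∃ A B : ℕ → Set ℕ,
      (∀ i < k, A i ∩ B i = ∅) ∧ X ⊆ ⋃ i < k, A i ×ˢ B i := by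
  refine Set.Finite.induction_on
    (motive := fun s _ => (∀ p ∈ s, p.1 ≠ p.2) → ∃ k, ∃ A B : ℕ → Set ℕ,
      (∀ i < k, A i ∩ B i = ∅) ∧ s ⊆ ⋃ i < k, A i ×ˢ B i) X hfin ?_ ?_
  · exact fun _ => ⟨0, fun _ => ∅, fun _ => ∅, by simp, by simp⟩
  · intro a s ha hs ih hd
    obtain ⟨k, A, B, hAB, hcov⟩ := ih (fun p hp => hd p (Set.mem_insert_of_mem _ hp))
    classical
    refine ⟨k + 1, fun i => if i < k then A i else {a.1},
      fun i => if i < k then B i else {a.2}, ?_, ?_⟩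
    · intro i hi
      by_cases h : i < k
      · simpa [h] using hAB i h
      · dsimp only
        rw [if_neg h, if_neg h, Set.singleton_inter_eq_empty]
        simpa using hd a (Set.mem_insert _ _)
    · intro p hp
      rcases hp with rfl | hp
      · simp only [Set.mem_iUnion]
        exact ⟨k, Nat.lt_succ_self k, by simp⟩
      · obtain ⟨i, hi, hpi⟩ := by simpa only [Set.mem_iUnion] using hcov hp
        simp only [Set.mem_iUnion]
        exact ⟨i, Nat.lt_succ_of_lt hi, by simpa [hi] using hpi⟩

/-- If `nor X > 2` then one of the two halves obtained by splitting `I` into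
`Z` and `I \ Z` keeps norm at least `nor X / 2 - 1`, i.e.
`2 * nor (half) + 2 ≥ nor X`. -/
theorem nor_split_half (I : Set ℕ) (hI : I.Finite) (Z : Set ℕ) (hZ : Z ⊆ I)
    (X : Set (ℕ × ℕ)) (hX : X ⊆ offDiagSq I) (hnor : 2 < nor X) :
    2 * nor (offDiagSq Z ∩ X) + 2 ≥ nor X ∨
    2 * nor (offDiagSq (I \ Z) ∩ X) + 2 ≥ nor X := by
  classical
  have hXsq : X ⊆ I ×ˢ I := fun p hp => (hX hp).1
  have hfin : X.Finite := (hI.prod hI).subset hXsq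
  have hd : ∀ p ∈ X, p.1 ≠ p.2 := fun p hp => (hX hp).2
  set P1 := offDiagSq Z ∩ X with hP1
  set P2 := offDiagSq (I \ Z) ∩ X with hP2
  have hne1 : {k : ℕ | ∃ A B : ℕ → Set ℕ,
      (∀ i < k, A i ∩ B i = ∅) ∧ P1 ⊆ ⋃ i < k, A i ×ˢ B i}.Nonempty :=
    exists_cover P1 (hfin.subset Set.inter_subset_right)
      (fun p hp => hd p hp.2)
  have hne2 : {k : ℕ | ∃ A B : ℕ → Set ℕ,
      (∀ i < k, A i ∩ B i = ∅) ∧ P2 ⊆ ⋃ i < k, A i ×ˢ B i}.Nonempty :=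
    exists_cover P2 (hfin.subset Set.inter_subset_right)
      (fun p hp => hd p hp.2)
  obtain ⟨A1, B1, h1d, h1c⟩ : nor P1 ∈ _ := Nat.sInf_mem hne1
  obtain ⟨A2, B2, h2d, h2c⟩ : nor P2 ∈ _ := Nat.sInf_mem hne2
  set k1 := nor P1
  set k2 := nor P2
  have key : nor X ≤ k1 + k2 + 2 := by
    apply Nat.sInf_le
    refine ⟨fun i => if i < k1 then A1 i else if i < k1 + k2 then A2 (i - k1)
        else if i = k1 + k2 then Z else I \ Z,
      fun i => if i < k1 then B1 i else if i < k1 + k2 then B2 (i - k1)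
        else if i = k1 + k2 then I \ Z else Z, ?_, ?_⟩
    · intro i hi
      dsimp only
      split_ifs with h1 h2 h3
      · exact h1d i h1
      · exact h2d (i - k1) (by omega)
      · exact Set.inter_diff_self Z I
      · exact Set.diff_inter_self
    · intro p hp
      have hpI := hX hp
      have hp1 : p.1 ∈ I := hpI.1.1
      have hp2 : p.2 ∈ I := hpI.1.2
      have hpne : p.1 ≠ p.2 := hpI.2
      simp only [Set.mem_iUnion]
      by_cases hz1 : p.1 ∈ Z <;> by_cases hz2 : p.2 ∈ Z
      · have : p ∈ P1 := ⟨⟨⟨hz1, hz2⟩, hpne⟩, hp⟩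
        obtain ⟨i, hi, hpi⟩ := by simpa only [Set.mem_iUnion] using h1c this
        exact ⟨i, by omega, by simpa [hi] using hpi⟩
      · exact ⟨k1 + k2, by omega, by
          simp only [lt_irrefl, Nat.not_lt.mpr (Nat.le_add_right k1 k2)]
          simp [Set.mem_prod, hz1, hz2, hp2]⟩
      · exact ⟨k1 + k2 + 1, by omega, by
          have h1 : ¬ (k1 + k2 + 1 < k1) := by omega
          have h2 : ¬ (k1 + k2 + 1 < k1 + k2) := by omega
          have h3 : ¬ (k1 + k2 + 1 = k1 + k2) := by omega
          simp [h1, h2, h3, Set.mem_prod, hz1, hz2, hp1]⟩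
      · have : p ∈ P2 := ⟨⟨⟨⟨hp1, hz1⟩, ⟨hp2, hz2⟩⟩, hpne⟩, hp⟩
        obtain ⟨i, hi, hpi⟩ := by simpa only [Set.mem_iUnion] using h2c this
        refine ⟨k1 + i, by omega, ?_⟩
        have h1 : ¬ (k1 + i < k1) := by omega
        have h2 : k1 + i < k1 + k2 := by omega
        simpa [h1, h2] using hpi
  rcases le_total k1 k2 with h | h
  · right; omega
  · left; omega
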